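/- arXiv:1909.09352 — 3 statements merged into one kernel-verified Lean document; each statement's English description precedes it below -/
import Mathlib

section
/- Let J be a transitive relation on a set M, S ⊆ M, and let d : M × M → ℝ be a function satisfying the reverse triangle inequality d(p,r) + d(r,q) ≤ d(p,q) whenever (p,r) ∈ J and (r,q) ∈ J. Define d_S(q) = sup { d(r,q) : r ∈ S, (r,q) ∈ J } for q in the 'future' of S and d_S(p) = −sup { d(p,r) : r ∈ S, (p,r) ∈ J } for p in the 'past' of S. Then for p, q in the future of S with (p,q) ∈ J, one has d_S(q) − d_S(p) ≥ d(p,q). -/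
/-- Proposition 2.8, first case: anti-Lipschitz property of the signed distance
in the future of `S`. -/
theorem stmt2 {M : Type*} (J : M → M → Prop) (htrans : Transitive J)
    (S : Set M) (d : M → M → ℝ)
    (hrev : ∀ p r q, J p r → J r q → d p r + d r q ≤ d p q)
    (dS : M → ℝ)
    (hdS : ∀ q, (∃ r ∈ S, J r q) →
      dS q = sSup {x : ℝ | ∃ r ∈ S, J r q ∧ d r q = x})
    (hbdd : ∀ q, (∃ r ∈ S, J r q) →
      BddAbove {x : ℝ | ∃ r ∈ S, J r q ∧ d r q = x})
    (p q : M) (hp : ∃ r ∈ S, J r p) (hq : ∃ r ∈ S, J r q) (hpq : J p q) :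
    dS q - dS p ≥ d p q := by
  rw [hdS q hq, hdS p hp]
  rw [ge_iff_le, le_sub_iff_add_le, add_comm, ← le_sub_iff_add_le]
  apply csSup_le
  · obtain ⟨r, hrS, hrp⟩ := hp
    exact ⟨d r p, r, hrS, hrp, rfl⟩
  · rintro x ⟨r, hrS, hrp, rfl⟩
    rw [le_sub_iff_add_le]
    calc d r p + d p q ≤ d r q := hrev r p q hrp hpq
      _ ≤ _ := le_csSup (hbdd q hq) ⟨r, hrS, htrans hrp hpq, rfl⟩
end

section
/- Let σ : ℝ → ℝ be differentiable with σ' increasing and σ'(s) > 2·max(sup_{[s,s+1]} ε⁻¹, 1) for all s, where ε : ℝ → (0,∞) is continuous. If t, τ ∈ ℝ satisfy |σ(τ) − σ(t)| < 2, then |τ − t| < ε(t). -/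
lemma key_mvt (σ : ℝ → ℝ) (hσ : Differentiable ℝ σ) (hmono : Monotone (deriv σ))
    {a b : ℝ} (hab : a ≤ b) : deriv σ a * (b - a) ≤ σ b - σ a := by
  rcases eq_or_lt_of_le hab with rfl | h
  · simp
  · obtain ⟨c, hc, hder⟩ := exists_deriv_eq_slope σ h (hσ.continuous.continuousOn)
      (fun x _ => (hσ.differentiableAt).differentiableWithinAt)
    have h1 : deriv σ a ≤ deriv σ c := hmono (le_of_lt hc.1)
    have h2 : deriv σ c * (b - a) = σ b - σ a := by
      rw [hder, div_mul_cancel₀ _ (by linarith : b - a ≠ 0)]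
    calc deriv σ a * (b - a) ≤ deriv σ c * (b - a) := by nlinarith
      _ = σ b - σ a := h2

/-- Key estimate in Theorem 2.22: if `σ'` is increasing and
`σ'(s) > 2·max(sup_{[s,s+1]} ε⁻¹, 1)` for all `s`, then `|σ(τ) - σ(t)| < 2`
implies `|τ - t| < ε(t)`. -/
theorem stmt6 (ε : ℝ → ℝ) (hεc : Continuous ε) (hεpos : ∀ s, 0 < ε s)
    (σ : ℝ → ℝ) (hσ : Differentiable ℝ σ) (hmono : Monotone (deriv σ))
    (hbig : ∀ s : ℝ,
      2 * max (sSup ((fun x => (ε x)⁻¹) '' Set.Icc s (s + 1))) 1 < deriv σ s)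
    (t τ : ℝ) (hclose : |σ τ - σ t| < 2) :
    |τ - t| < ε t := by
  have hεinv : Continuous (fun x => (ε x)⁻¹) :=
    hεc.inv₀ (fun x => (hεpos x).ne')
  have hsup : ∀ s x : ℝ, x ∈ Set.Icc s (s + 1) →
      (ε x)⁻¹ ≤ sSup ((fun x => (ε x)⁻¹) '' Set.Icc s (s + 1)) := by
    intro s x hx
    apply le_csSup
    · exact (isCompact_Icc.image hεinv).bddAbove
    · exact ⟨x, hx, rfl⟩
  have habs := abs_lt.mp hclose
  rcases le_or_gt t τ with h | h
  · -- case t ≤ τ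
    have hkey := key_mvt σ hσ hmono h
    have hs := hsup t t ⟨le_refl t, by linarith⟩
    have hb := hbig t
    have hεt : 2 * (ε t)⁻¹ < deriv σ t := by
      calc 2 * (ε t)⁻¹ ≤ 2 * max (sSup ((fun x => (ε x)⁻¹) '' Set.Icc t (t + 1))) 1 := by
            have := le_max_left (sSup ((fun x => (ε x)⁻¹) '' Set.Icc t (t + 1))) 1
            nlinarith
        _ < deriv σ t := hb
    have hεpos' := hεpos t
    have hinvpos : (0:ℝ) < (ε t)⁻¹ := by positivity
    rw [abs_of_nonneg (by linarith)]
    by_contra hcon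
    push_neg at hcon
    have : 2 * (ε t)⁻¹ * (τ - t) ≤ σ τ - σ t := by
      calc 2 * (ε t)⁻¹ * (τ - t) ≤ deriv σ t * (τ - t) := by nlinarith
        _ ≤ σ τ - σ t := hkey
    have h2 : 2 ≤ 2 * (ε t)⁻¹ * (τ - t) := by
      have : ε t ≤ τ - t := hcon
      have := (hεpos t).le
      rw [mul_comm 2 (ε t)⁻¹, mul_assoc]
      have h3 : 2 * (ε t) ≤ 2 * (τ - t) := by linarith
      calc (2:ℝ) = (ε t)⁻¹ * (2 * ε t) := by field_simp
        _ ≤ (ε t)⁻¹ * (2 * (τ - t)) := by nlinarith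
    linarith
  · -- case τ < t
    have hkey := key_mvt σ hσ hmono h.le
    have hb := hbig τ
    have hge2 : (2:ℝ) < deriv σ τ := by
      have := le_max_right (sSup ((fun x => (ε x)⁻¹) '' Set.Icc τ (τ + 1))) 1
      nlinarith
    have h1 : t - τ < 1 := by nlinarith
    have hs := hsup τ t ⟨h.le, by linarith⟩
    have hεt : 2 * (ε t)⁻¹ < deriv σ τ := by
      have := le_max_left (sSup ((fun x => (ε x)⁻¹) '' Set.Icc τ (τ + 1))) 1
      nlinarith [hsup τ t ⟨h.le, by linarith⟩]
    have hεpos' := hεpos t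
    have hinvpos : (0:ℝ) < (ε t)⁻¹ := by positivity
    rw [abs_of_nonpos (by linarith)]
    by_contra hcon
    push_neg at hcon
    have hcon' : ε t ≤ t - τ := by linarith
    have : 2 * (ε t)⁻¹ * (t - τ) ≤ σ t - σ τ := by
      calc 2 * (ε t)⁻¹ * (t - τ) ≤ deriv σ τ * (t - τ) := by nlinarith
        _ ≤ σ t - σ τ := hkey
    have h2 : 2 ≤ 2 * (ε t)⁻¹ * (t - τ) := by
      calc (2:ℝ) = (ε t)⁻¹ * (2 * ε t) := by field_simp
        _ ≤ (ε t)⁻¹ * (2 * (t - τ)) := by nlinarith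
        _ = 2 * (ε t)⁻¹ * (t - τ) := by ring
    linarith
end

section
/- Let J ⊆ M × M be a closed preorder on a topological space M (reflexive, transitive, closed as a subset of M × M), with M second countable and locally compact. Let A be a closed J-past set and B a closed J-future set with A ∩ B = ∅. Then there exists a continuous J-isotone function τ : M → [0,1] with τ⁻¹(0) = A and τ⁻¹(1) = B. -/
open Set Filter TopologicalSpace Topology

set_option linter.unusedSectionVars false
set_option linter.unusedVariables false
set_option maxHeartbeats 1000000

namespace Stmt12Aux

variable {M : Type*} [TopologicalSpace M]

def IsPast (J : M → M → Prop) (S : Set M) : Prop := ∀ ⦃x a : M⦄, a ∈ S → J x a → x ∈ S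

def IsFut (J : M → M → Prop) (S : Set M) : Prop := ∀ ⦃a x : M⦄, a ∈ S → J a x → x ∈ S

theorem isPast_swap {J : M → M → Prop} {S : Set M} : IsPast (Function.swap J) S ↔ IsFut J S :=
  ⟨fun h a x ha hax => h ha hax, fun h x a ha hax => h ha hax⟩

theorem isFut_swap {J : M → M → Prop} {S : Set M} : IsFut (Function.swap J) S ↔ IsPast J S :=
  ⟨fun h a x ha hax => h ha hax, fun h x a ha hax => h ha hax⟩

theorem isClosed_swap {J : M → M → Prop} (hclosed : IsClosed {p : M × M | J p.1 p.2}) :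
    IsClosed {p : M × M | (Function.swap J) p.1 p.2} :=
  hclosed.preimage continuous_swap

theorem IsPast.compl {J : M → M → Prop} {S : Set M} (h : IsPast J S) : IsFut J Sᶜ :=
  fun a x ha hax hx => ha (h hx hax)

theorem IsFut.compl {J : M → M → Prop} {S : Set M} (h : IsFut J S) : IsPast J Sᶜ :=
  fun x a ha hax hx => ha (h hx hax)

theorem IsPast.union {J : M → M → Prop} {S T : Set M} (hS : IsPast J S) (hT : IsPast J T) :
    IsPast J (S ∪ T) := by
  rintro x a (ha | ha) hax
  · exact Or.inl (hS ha hax)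
  · exact Or.inr (hT ha hax)

theorem isPast_iUnion {J : M → M → Prop} {ι : Sort*} {S : ι → Set M}
    (h : ∀ i, IsPast J (S i)) : IsPast J (⋃ i, S i) := by
  rintro x a ha hax
  rcases mem_iUnion.1 ha with ⟨i, hi⟩
  exact mem_iUnion.2 ⟨i, h i hi hax⟩

def dSet (J : M → M → Prop) (N : Set M) : Set M := {x | ∃ n ∈ N, J x n}

theorem subset_dSet (J : M → M → Prop) (hrefl : ∀ x, J x x) (N : Set M) : N ⊆ dSet J N :=
  fun x hx => ⟨x, hx, hrefl x⟩

theorem isPast_dSet (J : M → M → Prop) (htrans : ∀ x y z, J x y → J y z → J x z) (N : Set M) :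
    IsPast J (dSet J N) := by
  rintro x a ⟨n, hn, han⟩ hax
  exact ⟨n, hn, htrans _ _ _ hax han⟩

theorem isClosed_dSet {J : M → M → Prop} (hclosed : IsClosed {p : M × M | J p.1 p.2})
    {N : Set M} (hN : IsCompact N) : IsClosed (dSet J N) := by
  have : CompactSpace N := isCompact_iff_compactSpace.1 hN
  have hmap : Continuous (fun p : M × N => (p.1, (p.2 : M))) :=
    continuous_fst.prodMk (continuous_subtype_val.comp continuous_snd)
  have hS : IsClosed {p : M × N | J p.1 (p.2 : M)} := hclosed.preimage hmap
  have himg : dSet J N = Prod.fst '' {p : M × N | J p.1 (p.2 : M)} := by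
    ext x
    constructor
    · rintro ⟨n, hn, hxn⟩
      exact ⟨(x, ⟨n, hn⟩), hxn, rfl⟩
    · rintro ⟨⟨y, n⟩, hp, rfl⟩
      exact ⟨(n : M), n.2, hp⟩
  rw [himg]
  exact isClosedMap_fst_of_compactSpace _ hS

theorem disjoint_dSet {J : M → M → Prop} {N Q : Set M} (hQ : IsFut J Q)
    (h : Disjoint N Q) : Disjoint (dSet J N) Q := by
  rw [Set.disjoint_left]
  rintro z ⟨n, hn, hzn⟩ hzQ
  exact (Set.disjoint_left.1 h) hn (hQ hzQ hzn)

section LC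

variable [LocallyCompactSpace M] [SigmaCompactSpace M]

/-- One-sided thickening step. -/
theorem step_one (J : M → M → Prop) (hrefl : ∀ x, J x x)
    (htrans : ∀ x y z, J x y → J y z → J x z)
    (hclosed : IsClosed {p : M × M | J p.1 p.2})
    {P Q : Set M} (hPc : IsClosed P) (hPp : IsPast J P)
    (hQc : IsClosed Q) (hQf : IsFut J Q) (hd : Disjoint P Q)
    {K : Set M} (hK : IsCompact K) :
    ∃ P' : Set M, IsClosed P' ∧ IsPast J P' ∧ Disjoint P' Q ∧ P ⊆ P' ∧
      P ∩ K ⊆ interior P' := by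
  have hPK : IsCompact (P ∩ K) := hK.inter_left hPc
  obtain ⟨N, hNc, hN1, hN2⟩ := exists_compact_between hPK hQc.isOpen_compl
      (fun x hx => (Set.disjoint_left.1 hd) hx.1)
  refine ⟨P ∪ dSet J N, hPc.union (isClosed_dSet hclosed hNc),
    hPp.union (isPast_dSet J htrans N), ?_, subset_union_left, ?_⟩
  · exact Disjoint.union_left hd (disjoint_dSet hQf (Set.disjoint_left.2 fun x hxN hxQ => hN2 hxN hxQ))
  · exact hN1.trans (interior_mono ((subset_dSet J hrefl N).trans subset_union_right))

/-- Two-sided thickening step. -/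
theorem step_two (J : M → M → Prop) (hrefl : ∀ x, J x x)
    (htrans : ∀ x y z, J x y → J y z → J x z)
    (hclosed : IsClosed {p : M × M | J p.1 p.2})
    {P Q : Set M} (hPc : IsClosed P) (hPp : IsPast J P)
    (hQc : IsClosed Q) (hQf : IsFut J Q) (hd : Disjoint P Q)
    {K : Set M} (hK : IsCompact K) :
    ∃ P' Q' : Set M, IsClosed P' ∧ IsPast J P' ∧ IsClosed Q' ∧ IsFut J Q' ∧
      Disjoint P' Q' ∧ P ⊆ P' ∧ Q ⊆ Q' ∧
      P ∩ K ⊆ interior P' ∧ Q ∩ K ⊆ interior Q' := by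
  obtain ⟨P', hP'c, hP'p, hP'd, hPP', hPint⟩ :=
    step_one J hrefl htrans hclosed hPc hPp hQc hQf hd hK
  have hswap := step_one (Function.swap J) (fun x => hrefl x)
      (fun x y z h1 h2 => htrans _ _ _ h2 h1) (isClosed_swap hclosed)
      hQc (isPast_swap.2 hQf) hP'c (isFut_swap.2 hP'p) hP'd.symm hK
  obtain ⟨Q', hQ'c, hQ'p, hQ'd, hQQ', hQint⟩ := hswap
  exact ⟨P', Q', hP'c, hP'p, hQ'c, isPast_swap.1 hQ'p, hQ'd.symm, hPP', hQQ', hPint, hQint⟩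

/-- Normal separation of a closed past set from a disjoint closed future set by
open past/future sets. -/
theorem open_sep (J : M → M → Prop) (hrefl : ∀ x, J x x)
    (htrans : ∀ x y z, J x y → J y z → J x z)
    (hclosed : IsClosed {p : M × M | J p.1 p.2})
    {C D : Set M} (hCc : IsClosed C) (hCp : IsPast J C)
    (hDc : IsClosed D) (hDf : IsFut J D) (hd : Disjoint C D) :
    ∃ U V : Set M, IsOpen U ∧ IsPast J U ∧ IsOpen V ∧ IsFut J V ∧
      C ⊆ U ∧ D ⊆ V ∧ Disjoint U V := by
  classical
  set Inv : Set M × Set M → Prop := fun pq =>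
    IsClosed pq.1 ∧ IsPast J pq.1 ∧ IsClosed pq.2 ∧ IsFut J pq.2 ∧ Disjoint pq.1 pq.2 with hInv
  have hstep : ∀ (n : ℕ) (pq : Set M × Set M), Inv pq → ∃ pq' : Set M × Set M, Inv pq' ∧
      pq.1 ⊆ pq'.1 ∧ pq.2 ⊆ pq'.2 ∧
      pq.1 ∩ compactCovering M n ⊆ interior pq'.1 ∧
      pq.2 ∩ compactCovering M n ⊆ interior pq'.2 := by
    rintro n ⟨P, Q⟩ ⟨h1, h2, h3, h4, h5⟩
    obtain ⟨P', Q', hP'c, hP'p, hQ'c, hQ'f, hdis, hPP', hQQ', hPi, hQi⟩ :=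
      step_two J hrefl htrans hclosed h1 h2 h3 h4 h5 (isCompact_compactCovering M n)
    exact ⟨(P', Q'), ⟨hP'c, hP'p, hQ'c, hQ'f, hdis⟩, hPP', hQQ', hPi, hQi⟩
  choose F hF1 hF2 hF3 hF4 hF5 using hstep
  have inv0 : Inv (C, D) := ⟨hCc, hCp, hDc, hDf, hd⟩
  let seq : ℕ → {pq : Set M × Set M // Inv pq} := fun n =>
    Nat.rec ⟨(C, D), inv0⟩ (fun n prev => ⟨F n prev.1 prev.2, hF1 n prev.1 prev.2⟩) n
  have hseq : ∀ n, seq (n + 1) = ⟨F n (seq n).1 (seq n).2, hF1 n (seq n).1 (seq n).2⟩ :=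
    fun n => rfl
  set Pn : ℕ → Set M := fun n => (seq n).1.1 with hPn
  set Qn : ℕ → Set M := fun n => (seq n).1.2 with hQn
  have hPmono : ∀ n, Pn n ⊆ Pn (n + 1) := fun n => hF2 n (seq n).1 (seq n).2
  have hQmono : ∀ n, Qn n ⊆ Qn (n + 1) := fun n => hF3 n (seq n).1 (seq n).2
  have hPint : ∀ n, Pn n ∩ compactCovering M n ⊆ interior (Pn (n + 1)) :=
    fun n => hF4 n (seq n).1 (seq n).2
  have hQint : ∀ n, Qn n ∩ compactCovering M n ⊆ interior (Qn (n + 1)) :=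
    fun n => hF5 n (seq n).1 (seq n).2
  have hPle : ∀ {m n : ℕ}, m ≤ n → Pn m ⊆ Pn n := by
    intro m n h
    induction h with
    | refl => exact Subset.rfl
    | step h ih => exact ih.trans (hPmono _)
  have hQle : ∀ {m n : ℕ}, m ≤ n → Qn m ⊆ Qn n := by
    intro m n h
    induction h with
    | refl => exact Subset.rfl
    | step h ih => exact ih.trans (hQmono _)
  refine ⟨⋃ n, Pn n, ⋃ n, Qn n, ?_, ?_, ?_, ?_, ?_, ?_, ?_⟩
  · rw [isOpen_iff_mem_nhds]
    rintro x hx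
    rcases mem_iUnion.1 hx with ⟨n, hn⟩
    rcases exists_mem_compactCovering x with ⟨m, hm⟩
    set j := max n m
    have hxj : x ∈ Pn j ∩ compactCovering M j :=
      ⟨hPle (le_max_left n m) hn, compactCovering_subset M (le_max_right n m) hm⟩
    exact mem_of_superset (mem_interior_iff_mem_nhds.1 (hPint j hxj))
      (subset_iUnion Pn (j + 1))
  · exact isPast_iUnion fun n => ((seq n).2).2.1
  · rw [isOpen_iff_mem_nhds]
    rintro x hx
    rcases mem_iUnion.1 hx with ⟨n, hn⟩
    rcases exists_mem_compactCovering x with ⟨m, hm⟩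
    set j := max n m
    have hxj : x ∈ Qn j ∩ compactCovering M j :=
      ⟨hQle (le_max_left n m) hn, compactCovering_subset M (le_max_right n m) hm⟩
    exact mem_of_superset (mem_interior_iff_mem_nhds.1 (hQint j hxj))
      (subset_iUnion Qn (j + 1))
  · intro a x ha hax
    rcases mem_iUnion.1 ha with ⟨n, hn⟩
    exact mem_iUnion.2 ⟨n, ((seq n).2).2.2.2.1 hn hax⟩
  · exact subset_iUnion Pn 0
  · exact subset_iUnion Qn 0
  · rw [Set.disjoint_left]
    rintro x hx hx'
    rcases mem_iUnion.1 hx with ⟨n, hn⟩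
    rcases mem_iUnion.1 hx' with ⟨m, hm⟩
    rcases le_total n m with h | h
    · exact (Set.disjoint_left.1 ((seq m).2).2.2.2.2) (hPle h hn) hm
    · exact (Set.disjoint_left.1 ((seq n).2).2.2.2.2) hn (hQle h hm)

end LC

/-- Data for the ordered Urysohn construction: a closed past set `C` inside an open past
set `U`, together with an interpolation property. -/
structure PCU (J : M → M → Prop) (M' : Type*) [TopologicalSpace M'] where
  protected C : Set M
  protected U : Set M
  protected closed_C : IsClosed C
  protected past_C : IsPast J C
  protected open_U : IsOpen U
  protected past_U : IsPast J U
  protected subset : C ⊆ U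
  protected hP : ∀ c u : Set M, IsClosed c → IsPast J c → IsOpen u → IsPast J u → c ⊆ u →
    ∃ vp : Set M × Set M, IsOpen vp.1 ∧ IsPast J vp.1 ∧ c ⊆ vp.1 ∧ vp.1 ⊆ vp.2 ∧
      IsClosed vp.2 ∧ IsPast J vp.2 ∧ vp.2 ⊆ u

namespace PCU

variable {J : M → M → Prop}

abbrev PC (J : M → M → Prop) := PCU J M

noncomputable def midc (c : PCU J M) : Set M × Set M :=
  (c.hP c.C c.U c.closed_C c.past_C c.open_U c.past_U c.subset).choose

theorem midc_spec (c : PCU J M) :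
    IsOpen c.midc.1 ∧ IsPast J c.midc.1 ∧ c.C ⊆ c.midc.1 ∧ c.midc.1 ⊆ c.midc.2 ∧
      IsClosed c.midc.2 ∧ IsPast J c.midc.2 ∧ c.midc.2 ⊆ c.U :=
  (c.hP c.C c.U c.closed_C c.past_C c.open_U c.past_U c.subset).choose_spec

noncomputable def left (c : PCU J M) : PCU J M where
  C := c.C
  U := c.midc.1
  closed_C := c.closed_C
  past_C := c.past_C
  open_U := c.midc_spec.1
  past_U := c.midc_spec.2.1
  subset := c.midc_spec.2.2.1
  hP := c.hP

noncomputable def right (c : PCU J M) : PCU J M where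
  C := c.midc.2
  U := c.U
  closed_C := c.midc_spec.2.2.2.2.1
  past_C := c.midc_spec.2.2.2.2.2.1
  open_U := c.open_U
  past_U := c.past_U
  subset := c.midc_spec.2.2.2.2.2.2
  hP := c.hP

@[simp] theorem left_C (c : PCU J M) : c.left.C = c.C := rfl

@[simp] theorem right_U (c : PCU J M) : c.right.U = c.U := rfl

theorem left_U_subset_right_C (c : PCU J M) : c.left.U ⊆ c.right.C :=
  c.midc_spec.2.2.2.1

theorem left_U_subset (c : PCU J M) : c.left.U ⊆ c.U :=
  Subset.trans c.left_U_subset_right_C c.right.subset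

theorem subset_right_C (c : PCU J M) : c.C ⊆ c.right.C :=
  Subset.trans c.left.subset c.left_U_subset_right_C

noncomputable def approx : ℕ → PCU J M → M → ℝ
  | 0, c, x => indicator c.Uᶜ 1 x
  | n + 1, c, x => midpoint ℝ (approx n c.left x) (approx n c.right x)

theorem approx_of_mem_C (c : PCU J M) (n : ℕ) {x : M} (hx : x ∈ c.C) : c.approx n x = 0 := by
  induction n generalizing c with
  | zero => exact indicator_of_notMem (fun (hU : x ∈ c.Uᶜ) => hU <| c.subset hx) _
  | succ n ihn =>
    simp only [approx]
    rw [ihn, ihn, midpoint_self]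
    exacts [c.subset_right_C hx, hx]

theorem approx_of_nmem_U (c : PCU J M) (n : ℕ) {x : M} (hx : x ∉ c.U) : c.approx n x = 1 := by
  induction n generalizing c with
  | zero =>
    rw [← mem_compl_iff] at hx
    exact indicator_of_mem hx _
  | succ n ihn =>
    simp only [approx]
    rw [ihn, ihn, midpoint_self]
    exacts [hx, fun hU => hx <| c.left_U_subset hU]

theorem approx_nonneg (c : PCU J M) (n : ℕ) (x : M) : 0 ≤ c.approx n x := by
  induction n generalizing c with
  | zero => exact indicator_nonneg (fun _ _ => zero_le_one) _
  | succ n ihn =>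
    simp only [approx, midpoint_eq_smul_add, invOf_eq_inv]
    refine mul_nonneg (inv_nonneg.2 zero_le_two) (add_nonneg ?_ ?_) <;> apply ihn

theorem approx_le_one (c : PCU J M) (n : ℕ) (x : M) : c.approx n x ≤ 1 := by
  induction n generalizing c with
  | zero => exact indicator_apply_le' (fun _ => le_rfl) fun _ => zero_le_one
  | succ n ihn =>
    simp only [approx, midpoint_eq_smul_add, invOf_eq_inv, smul_eq_mul, ← div_eq_inv_mul]
    have := add_le_add (ihn (left c)) (ihn (right c))
    norm_num at this
    exact Iff.mpr (div_le_one zero_lt_two) this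

theorem bddAbove_range_approx (c : PCU J M) (x : M) : BddAbove (range fun n => c.approx n x) :=
  ⟨1, fun _ ⟨n, hn⟩ => hn ▸ c.approx_le_one n x⟩

theorem approx_le_approx_of_U_sub_C {c₁ c₂ : PCU J M} (h : c₁.U ⊆ c₂.C) (n₁ n₂ : ℕ) (x : M) :
    c₂.approx n₂ x ≤ c₁.approx n₁ x := by
  by_cases hx : x ∈ c₁.U
  · calc
      approx n₂ c₂ x = 0 := approx_of_mem_C _ _ (h hx)
      _ ≤ approx n₁ c₁ x := approx_nonneg _ _ _
  · calc
      approx n₂ c₂ x ≤ 1 := approx_le_one _ _ _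
      _ = approx n₁ c₁ x := (approx_of_nmem_U _ _ hx).symm

theorem approx_mem_Icc_right_left (c : PCU J M) (n : ℕ) (x : M) :
    c.approx n x ∈ Icc (c.right.approx n x) (c.left.approx n x) := by
  induction' n with n ihn generalizing c
  · exact ⟨le_rfl, indicator_le_indicator_of_subset (compl_subset_compl.2 c.left_U_subset)
      (fun _ => zero_le_one) _⟩
  · simp only [approx, mem_Icc]
    refine ⟨midpoint_le_midpoint ?_ (ihn _).1, midpoint_le_midpoint (ihn _).2 ?_⟩ <;>
      apply approx_le_approx_of_U_sub_C
    exacts [c.left_U_subset_right_C, c.left_U_subset_right_C]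

theorem approx_le_succ (c : PCU J M) (n : ℕ) (x : M) : c.approx n x ≤ c.approx (n + 1) x := by
  induction' n with n ihn generalizing c
  · simp only [approx, right_U, right_le_midpoint]
    exact (approx_mem_Icc_right_left c 0 x).2
  · rw [approx, approx]
    exact midpoint_le_midpoint (ihn _) (ihn _)

theorem approx_mono (c : PCU J M) (x : M) : Monotone fun n => c.approx n x :=
  monotone_nat_of_le_succ fun n => c.approx_le_succ n x

theorem approx_isotone (n : ℕ) (c : PCU J M) {x y : M} (h : J x y) :
    c.approx n x ≤ c.approx n y := by
  induction n generalizing c with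
  | zero =>
    by_cases hy : y ∈ c.U
    · have hx : x ∈ c.U := c.past_U hy h
      simp [approx, indicator_of_notMem, hx, hy]
    · calc c.approx 0 x ≤ 1 := c.approx_le_one 0 x
        _ = c.approx 0 y := (c.approx_of_nmem_U 0 hy).symm
  | succ n ihn =>
    exact midpoint_le_midpoint (ihn c.left) (ihn c.right)

protected noncomputable def lim (c : PCU J M) (x : M) : ℝ :=
  ⨆ n, c.approx n x

theorem tendsto_approx_atTop (c : PCU J M) (x : M) :
    Tendsto (fun n => c.approx n x) atTop (𝓝 <| c.lim x) :=
  tendsto_atTop_ciSup (c.approx_mono x) ⟨1, fun _ ⟨_, hn⟩ => hn ▸ c.approx_le_one _ _⟩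

theorem lim_of_mem_C (c : PCU J M) (x : M) (h : x ∈ c.C) : c.lim x = 0 := by
  simp only [PCU.lim, approx_of_mem_C, h, ciSup_const]

theorem lim_of_nmem_U (c : PCU J M) (x : M) (h : x ∉ c.U) : c.lim x = 1 := by
  simp only [PCU.lim, approx_of_nmem_U c _ h, ciSup_const]

theorem lim_eq_midpoint (c : PCU J M) (x : M) :
    c.lim x = midpoint ℝ (c.left.lim x) (c.right.lim x) := by
  refine tendsto_nhds_unique (c.tendsto_approx_atTop x) ((tendsto_add_atTop_iff_nat 1).1 ?_)
  simp only [approx]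
  exact (c.left.tendsto_approx_atTop x).midpoint (c.right.tendsto_approx_atTop x)

theorem approx_le_lim (c : PCU J M) (x : M) (n : ℕ) : c.approx n x ≤ c.lim x :=
  le_ciSup (c.bddAbove_range_approx x) _

theorem lim_nonneg (c : PCU J M) (x : M) : 0 ≤ c.lim x :=
  (c.approx_nonneg 0 x).trans (c.approx_le_lim x 0)

theorem lim_le_one (c : PCU J M) (x : M) : c.lim x ≤ 1 :=
  ciSup_le fun _ => c.approx_le_one _ _

theorem lim_mem_Icc (c : PCU J M) (x : M) : c.lim x ∈ Icc (0 : ℝ) 1 :=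
  ⟨c.lim_nonneg x, c.lim_le_one x⟩

theorem lim_isotone (c : PCU J M) {x y : M} (h : J x y) : c.lim x ≤ c.lim y :=
  ciSup_mono (c.bddAbove_range_approx y) fun n => approx_isotone n c h

theorem continuous_lim (c : PCU J M) : Continuous c.lim := by
  obtain ⟨h0, h1234, h1⟩ : 0 < (2⁻¹ : ℝ) ∧ (2⁻¹ : ℝ) < 3 / 4 ∧ (3 / 4 : ℝ) < 1 := by norm_num
  refine
    continuous_iff_continuousAt.2 fun x =>
      (Metric.nhds_basis_closedBall_pow (h0.trans h1234) h1).tendsto_right_iff.2 fun n _ => ?_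
  simp only [Metric.mem_closedBall]
  induction' n with n ihn generalizing c
  · filter_upwards with y
    rw [pow_zero]
    exact Real.dist_le_of_mem_Icc_01 (c.lim_mem_Icc _) (c.lim_mem_Icc _)
  · by_cases hxl : x ∈ c.left.U
    · filter_upwards [IsOpen.mem_nhds c.left.open_U hxl, ihn c.left] with _ hyl hyd
      rw [pow_succ', c.lim_eq_midpoint, c.lim_eq_midpoint,
        c.right.lim_of_mem_C _ (c.left_U_subset_right_C hyl),
        c.right.lim_of_mem_C _ (c.left_U_subset_right_C hxl)]
      refine (dist_midpoint_midpoint_le _ _ _ _).trans ?_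
      rw [dist_self, add_zero, div_eq_inv_mul]
      gcongr
    · replace hxl : x ∈ c.left.right.Cᶜ :=
        compl_subset_compl.2 c.left.right.subset hxl
      filter_upwards [IsOpen.mem_nhds (isOpen_compl_iff.2 c.left.right.closed_C) hxl,
        ihn c.left.right, ihn c.right] with y hyl hydl hydr
      replace hxl : x ∉ c.left.left.U :=
        compl_subset_compl.2 c.left.left_U_subset_right_C hxl
      replace hyl : y ∉ c.left.left.U :=
        compl_subset_compl.2 c.left.left_U_subset_right_C hyl
      simp only [pow_succ, c.lim_eq_midpoint, c.left.lim_eq_midpoint,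
        c.left.left.lim_of_nmem_U _ hxl, c.left.left.lim_of_nmem_U _ hyl]
      refine (dist_midpoint_midpoint_le _ _ _ _).trans ?_
      refine (div_le_div_of_nonneg_right (add_le_add_left (dist_midpoint_midpoint_le _ _ _ _) _)
        zero_le_two).trans ?_
      rw [dist_self, zero_add]
      set r := (3 / 4 : ℝ) ^ n
      calc _ ≤ (r / 2 + r) / 2 := by gcongr
        _ = _ := by field_simp; ring

end PCU

section Main

variable [LocallyCompactSpace M] [SecondCountableTopology M]

/-- Ordered Urysohn lemma. -/
theorem urysohn_sep (J : M → M → Prop) (hrefl : ∀ x, J x x)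
    (htrans : ∀ x y z, J x y → J y z → J x z)
    (hclosed : IsClosed {p : M × M | J p.1 p.2})
    {C D : Set M} (hCc : IsClosed C) (hCp : IsPast J C)
    (hDc : IsClosed D) (hDf : IsFut J D) (hd : Disjoint C D) :
    ∃ f : M → ℝ, Continuous f ∧ (∀ x, f x ∈ Icc (0:ℝ) 1) ∧
      (∀ x y, J x y → f x ≤ f y) ∧ (∀ x ∈ C, f x = 0) ∧ (∀ x ∈ D, f x = 1) := by
  set c : PCU J M :=
    { C := C
      U := Dᶜ
      closed_C := hCc
      past_C := hCp
      open_U := hDc.isOpen_compl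
      past_U := hDf.compl
      subset := hd.subset_compl_right
      hP := by
        intro c u hc hcp hu hup hcu
        obtain ⟨U, V, hUo, hUp, hVo, hVf, hCU, hDV, hUV⟩ :=
          open_sep J hrefl htrans hclosed hc hcp hu.isClosed_compl hup.compl
            (disjoint_compl_right.mono_left hcu)
        exact ⟨(U, Vᶜ), hUo, hUp, hCU, hUV.subset_compl_right, hVo.isClosed_compl,
          hVf.compl, compl_subset_comm.1 hDV⟩ }
  refine ⟨c.lim, c.continuous_lim, c.lim_mem_Icc, fun x y h => c.lim_isotone h,
    fun x hx => c.lim_of_mem_C x hx, fun x hx => c.lim_of_nmem_U x (fun hU => hU hx)⟩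

/-- A closed past set is the exact zero set of a continuous isotone function. -/
theorem exact_zero (J : M → M → Prop) (hrefl : ∀ x, J x x)
    (htrans : ∀ x y z, J x y → J y z → J x z)
    (hclosed : IsClosed {p : M × M | J p.1 p.2})
    {A : Set M} (hA : IsClosed A) (hAp : IsPast J A) :
    ∃ g : M → ℝ, Continuous g ∧ (∀ x, 0 ≤ g x) ∧ (∀ x, g x ≤ 1) ∧
      (∀ x y, J x y → g x ≤ g y) ∧ g ⁻¹' {0} = A := by
  classical
  rcases eq_or_ne A univ with hAu | hAne
  · exact ⟨fun _ => 0, continuous_const, fun x => le_rfl, fun x => zero_le_one,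
      fun x y _ => le_rfl, by simp [hAu]⟩
  have hAc : (Aᶜ).Nonempty := nonempty_compl.2 hAne
  -- for each point outside A, a compact neighborhood inside Aᶜ
  have hK : ∀ i : ↥(Aᶜ), ∃ K : Set M, IsCompact K ∧ (i : M) ∈ interior K ∧ K ⊆ Aᶜ :=
    fun i => exists_compact_subset hA.isOpen_compl i.2
  choose K hKc hKi hKA using hK
  -- Urysohn functions
  have hf : ∀ i : ↥(Aᶜ), ∃ f : M → ℝ, Continuous f ∧ (∀ x, f x ∈ Icc (0:ℝ) 1) ∧
      (∀ x y, J x y → f x ≤ f y) ∧ (∀ x ∈ A, f x = 0) ∧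
      (∀ x ∈ dSet (Function.swap J) (K i), f x = 1) := by
    intro i
    refine urysohn_sep J hrefl htrans hclosed hA hAp
      (isClosed_dSet (isClosed_swap hclosed) (hKc i))
      (isPast_swap.1 (isPast_dSet (Function.swap J)
        (fun x y z h1 h2 => htrans z y x h2 h1) (K i))) ?_
    rw [Set.disjoint_left]
    rintro a haA ⟨n, hn, hna⟩
    exact hKA i hn (hAp haA hna)
  choose f hfc hfI hfiso hfA hfD using hf
  -- countable subcover of Aᶜ by the interiors
  obtain ⟨T, hTc, hTU⟩ := isOpen_iUnion_countable (fun i : ↥(Aᶜ) => interior (K i))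
    (fun i => isOpen_interior)
  have hTne : T.Nonempty := by
    rcases hAc with ⟨x, hx⟩
    have : x ∈ ⋃ i ∈ T, interior (K i) := by
      rw [hTU]
      exact mem_iUnion.2 ⟨⟨x, hx⟩, hKi _⟩
    rcases mem_iUnion₂.1 this with ⟨i, hi, _⟩
    exact ⟨i, hi⟩
  obtain ⟨e, hrange⟩ := hTc.exists_eq_range hTne
  -- the sum
  set g : M → ℝ := fun z => ∑' n : ℕ, (1/2 : ℝ) ^ (n + 1) * f (e n) z with hg
  have hterm_bound : ∀ n z, ‖(1/2 : ℝ) ^ (n + 1) * f (e n) z‖ ≤ (1/2 : ℝ) ^ (n + 1) := by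
    intro n z
    rw [Real.norm_eq_abs, abs_mul, abs_of_nonneg (by positivity)]
    nlinarith [(hfI (e n) z).1, (hfI (e n) z).2, abs_of_nonneg ((hfI (e n) z).1),
      pow_pos (by norm_num : (0:ℝ) < 1/2) (n+1)]
  have hsum : Summable (fun n : ℕ => (1/2 : ℝ) ^ (n + 1)) := by
    apply Summable.comp_injective (summable_geometric_of_lt_one (by norm_num) (by norm_num))
      (add_left_injective 1)
  have hgz : ∀ z, Summable (fun n : ℕ => (1/2 : ℝ) ^ (n + 1) * f (e n) z) := by
    intro z
    exact Summable.of_norm_bounded hsum (fun n => hterm_bound n z)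
  have hterm_nonneg : ∀ n z, 0 ≤ (1/2 : ℝ) ^ (n + 1) * f (e n) z := by
    intro n z
    exact mul_nonneg (by positivity) ((hfI (e n) z).1)
  refine ⟨g, ?_, ?_, ?_, ?_, ?_⟩
  · exact continuous_tsum (fun n => (continuous_const.mul (hfc (e n)))) hsum
      (fun n z => hterm_bound n z)
  · intro x
    exact tsum_nonneg (fun n => hterm_nonneg n x)
  · intro x
    calc g x ≤ ∑' n : ℕ, (1/2 : ℝ) ^ (n + 1) := by
          refine Summable.tsum_le_tsum (fun n => ?_) (hgz x) hsum
          nlinarith [(hfI (e n) x).2, pow_pos (by norm_num : (0:ℝ) < 1/2) (n+1)]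
      _ = 1 := by
          have h2 : ∑' n : ℕ, (1/2:ℝ)^n = 2 := tsum_geometric_two
          calc ∑' n : ℕ, (1/2:ℝ)^(n+1) = ∑' n : ℕ, (1/2) * (1/2:ℝ)^n := by
                exact tsum_congr (fun n => by ring)
            _ = (1/2) * ∑' n : ℕ, (1/2:ℝ)^n := tsum_mul_left
            _ = 1 := by rw [h2]; norm_num
  · intro x y hxy
    exact Summable.tsum_le_tsum (fun n => mul_le_mul_of_nonneg_left (hfiso (e n) x y hxy) (by positivity))
      (hgz x) (hgz y)
  · apply Set.eq_of_subset_of_subset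
    · intro x hx
      by_contra hxA
      have hxc : x ∈ ⋃ i ∈ T, interior (K i) := by
        rw [hTU]; exact mem_iUnion.2 ⟨⟨x, hxA⟩, hKi _⟩
      rcases mem_iUnion₂.1 hxc with ⟨i, hiT, hxi⟩
      rw [hrange] at hiT
      rcases hiT with ⟨n, rfl⟩
      have h1 : f (e n) x = 1 := by
        refine hfD (e n) x ?_
        exact subset_dSet (Function.swap J) (fun x => hrefl x) _ (interior_subset hxi)
      have hge : (1/2 : ℝ) ^ (n + 1) * f (e n) x ≤ g x :=
        Summable.le_tsum (hgz x) n (fun m _ => hterm_nonneg m x)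
      rw [h1, mul_one] at hge
      have : g x = 0 := hx
      nlinarith [pow_pos (by norm_num : (0:ℝ) < 1/2) (n+1)]
    · intro x hxA
      have : ∀ n : ℕ, (1/2 : ℝ) ^ (n + 1) * f (e n) x = 0 := by
        intro n; rw [hfA (e n) x hxA, mul_zero]
      simp only [Set.mem_preimage, Set.mem_singleton_iff, hg]
      calc (∑' n : ℕ, (1/2 : ℝ) ^ (n + 1) * f (e n) x) = ∑' _ : ℕ, (0:ℝ) := tsum_congr this
        _ = 0 := tsum_zero

end Main

end Stmt12Aux

open Stmt12Aux in
/-- Perfectly normally ordered property for closed preorders (used in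
Theorems 2.19 and 2.20): a closed past set and a disjoint closed future set
are exactly separated by a continuous isotone function with values in `[0,1]`. -/
theorem stmt12 {M : Type*} [TopologicalSpace M] [SecondCountableTopology M]
    [LocallyCompactSpace M]
    (J : M → M → Prop) (hrefl : ∀ x, J x x)
    (htrans : ∀ x y z, J x y → J y z → J x z)
    (hclosed : IsClosed {p : M × M | J p.1 p.2})
    (A B : Set M) (hA : IsClosed A) (hB : IsClosed B)
    (hApast : ∀ x a, a ∈ A → J x a → x ∈ A)
    (hBfut : ∀ b x, b ∈ B → J b x → x ∈ B)
    (hAB : A ∩ B = ∅) :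
    ∃ τ : M → ℝ, Continuous τ ∧ (∀ x, τ x ∈ Set.Icc (0:ℝ) 1) ∧
      (∀ x y, J x y → τ x ≤ τ y) ∧ τ ⁻¹' {0} = A ∧ τ ⁻¹' {1} = B := by
  obtain ⟨g, hgc, hg0, hg1, hgiso, hgA⟩ := exact_zero J hrefl htrans hclosed hA
    (fun x a ha hxa => hApast x a ha hxa)
  obtain ⟨b, hbc, hb0, hb1, hbiso, hbB⟩ := exact_zero (Function.swap J)
    (fun x => hrefl x) (fun x y z h1 h2 => htrans z y x h2 h1)
    (hclosed.preimage continuous_swap) hB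
    (fun x a ha hxa => hBfut a x ha hxa)
  have hgA' : ∀ x, g x = 0 ↔ x ∈ A := fun x => by
    rw [← hgA]; simp
  have hbB' : ∀ x, b x = 0 ↔ x ∈ B := fun x => by
    rw [← hbB]; simp
  have hpos : ∀ x, 0 < g x + b x := by
    intro x
    rcases (hg0 x).lt_or_eq with h | h
    · exact add_pos_of_pos_of_nonneg h (hb0 x)
    · rcases (hb0 x).lt_or_eq with h' | h'
      · exact add_pos_of_nonneg_of_pos (hg0 x) h'
      · exfalso
        have hx : x ∈ A ∩ B := ⟨(hgA' x).1 h.symm, (hbB' x).1 h'.symm⟩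
        simp [hAB] at hx
  refine ⟨fun x => g x / (g x + b x), ?_, ?_, ?_, ?_, ?_⟩
  · exact hgc.div (hgc.add hbc) (fun x => (hpos x).ne')
  · intro x
    exact ⟨div_nonneg (hg0 x) (hpos x).le,
      (div_le_one (hpos x)).2 (le_add_of_nonneg_right (hb0 x))⟩
  · intro x y hxy
    rw [div_le_div_iff₀ (hpos x) (hpos y)]
    have h1 : g x ≤ g y := hgiso x y hxy
    have h2 : b y ≤ b x := hbiso y x hxy
    nlinarith [hg0 x, hg0 y, hb0 x, hb0 y, mul_le_mul h1 h2 (hb0 y) (hg0 y)]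
  · ext x
    simp only [Set.mem_preimage, Set.mem_singleton_iff]
    rw [div_eq_zero_iff]
    constructor
    · rintro (h | h)
      · exact (hgA' x).1 h
      · exact absurd h (hpos x).ne'
    · intro h
      exact Or.inl ((hgA' x).2 h)
  · ext x
    simp only [Set.mem_preimage, Set.mem_singleton_iff]
    rw [div_eq_one_iff_eq (hpos x).ne']
    constructor
    · intro h
      exact (hbB' x).1 (by linarith)
    · intro h
      have : b x = 0 := (hbB' x).2 h
      linarith
end
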